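/- Let τ > 0 and define ρ_t = ρ_0(t+1)^a, α_t = α_0(t+1)^b for t = 0,1,2,…, and P_t = ρ_{t+1}(ρ_t − τ)/α_t − (ρ_{t+1} − ρ_t). Then: (i) if 0 ≤ a ≤ b, ρ_0 > τ and α_0 ≥ ρ_0 + τ, then ρ_t > τ and α_t ≥ ρ_t + τ for every t ≥ 0; (ii) if 0 < a ≤ b ≤ 1, then P_t/(ρ_t²/α_t) → 1 as t → ∞, and consequently there exists an integer t̄ ≥ 0 such that ρ_{t+1}(ρ_t − τ) > α_t(ρ_{t+1} − ρ_t) for all t ≥ t̄. (Lemma 2(a),(b).) -/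

import Mathlib

open Filter Real

/-- **Lemma 2(a),(b).** With `ρ_t = ρ₀(t+1)^a`, `α_t = α₀(t+1)^b` and
`P_t = ρ_{t+1}(ρ_t − τ)/α_t − (ρ_{t+1} − ρ_t)`:
(i) if `0 ≤ a ≤ b`, `ρ₀ > τ` and `α₀ ≥ ρ₀ + τ`, then `ρ_t > τ` and `α_t ≥ ρ_t + τ` for all `t`;
(ii) if `0 < a ≤ b ≤ 1`, then `P_t/(ρ_t²/α_t) → 1`, and consequently there exists `t̄ ≥ 0`
such that `ρ_{t+1}(ρ_t − τ) > α_t(ρ_{t+1} − ρ_t)` for all `t ≥ t̄`. -/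
theorem power_parameter_sequences
    (τ ρ0 α0 : ℝ) (hτ : 0 < τ) (hρ0 : 0 < ρ0) (hα0 : 0 < α0)
    (a b : ℝ) (ρ α P : ℕ → ℝ)
    (hρdef : ∀ t, ρ t = ρ0 * ((t : ℝ) + 1) ^ a)
    (hαdef : ∀ t, α t = α0 * ((t : ℝ) + 1) ^ b)
    (hPdef : ∀ t, P t = ρ (t + 1) * (ρ t - τ) / α t - (ρ (t + 1) - ρ t)) :
    ((0 ≤ a → a ≤ b → τ < ρ0 → ρ0 + τ ≤ α0 → ∀ t, τ < ρ t ∧ ρ t + τ ≤ α t) ∧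
     (0 < a → a ≤ b → b ≤ 1 →
       Filter.Tendsto (fun t => P t / (ρ t ^ 2 / α t)) Filter.atTop (nhds 1) ∧
       ∃ tbar : ℕ, ∀ t ≥ tbar, α t * (ρ (t + 1) - ρ t) < ρ (t + 1) * (ρ t - τ))) := by
  have hx : ∀ t : ℕ, (0:ℝ) < (t:ℝ) + 1 := fun t => by positivity
  have hx1 : ∀ t : ℕ, (1:ℝ) ≤ (t:ℝ) + 1 := fun t => by
    have := Nat.cast_nonneg (α := ℝ) t; linarith
  constructor
  · intro ha hab hτρ hα
    intro t
    have h1 : (1:ℝ) ≤ ((t:ℝ)+1) ^ a := Real.one_le_rpow (hx1 t) ha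
    have h2 : ((t:ℝ)+1) ^ a ≤ ((t:ℝ)+1) ^ b :=
      Real.rpow_le_rpow_of_exponent_le (hx1 t) hab
    have h3 : (1:ℝ) ≤ ((t:ℝ)+1) ^ b := le_trans h1 h2
    constructor
    · rw [hρdef]; nlinarith
    · rw [hρdef, hαdef]; nlinarith
  · intro ha hab hb1
    have hρpos : ∀ t, 0 < ρ t := fun t => by
      rw [hρdef]; positivity
    have hαpos : ∀ t, 0 < α t := fun t => by
      rw [hαdef]; positivity
    have key : ∀ t : ℕ, P t / (ρ t ^ 2 / α t)
        = (1 + 1/((t:ℝ)+1)) ^ a * (1 - τ / ρ t)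
          - (α0/ρ0) * ((t:ℝ)+1) ^ (b-a) * ((1 + 1/((t:ℝ)+1)) ^ a - 1) := by
      intro t
      have hxt := hx t
      have h1 : (1 + 1/((t:ℝ)+1)) = ((t:ℝ)+2)/((t:ℝ)+1) := by field_simp; ring
      have hρt := hρpos t
      have hαt := hαpos t
      rw [hPdef, h1, Real.div_rpow (by positivity) hxt.le, Real.rpow_sub hxt,
        hρdef t, hρdef (t+1), hαdef t]
      push_cast
      have e2 : ((t:ℝ) + 1 + 1) = (t:ℝ) + 2 := by ring
      rw [e2]
      have hA : (0:ℝ) < ((t:ℝ)+1) ^ a := by positivity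
      have hB : (0:ℝ) < ((t:ℝ)+2) ^ a := by positivity
      have hC : (0:ℝ) < ((t:ℝ)+1) ^ b := by positivity
      field_simp
    rw [funext key]
    have hxtend : Tendsto (fun t : ℕ => (t:ℝ) + 1) atTop atTop :=
      tendsto_atTop_add_const_right _ 1 tendsto_natCast_atTop_atTop
    have hu : Tendsto (fun t : ℕ => 1 + 1/((t:ℝ)+1)) atTop (nhds 1) := by
      have h0 : Tendsto (fun t : ℕ => 1/((t:ℝ)+1)) atTop (nhds 0) :=
        tendsto_const_nhds.div_atTop hxtend
      simpa using tendsto_const_nhds.add h0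
    have t1 : Tendsto (fun t : ℕ => (1 + 1/((t:ℝ)+1)) ^ a) atTop (nhds 1) := by
      have hc : ContinuousAt (fun x : ℝ => x ^ a) 1 :=
        Real.continuousAt_rpow_const 1 a (Or.inl one_ne_zero)
      have := hc.tendsto.comp hu
      simpa [Function.comp_def] using this
    have hρtend : Tendsto (fun t : ℕ => ρ t) atTop atTop := by
      rw [funext hρdef]
      exact Tendsto.const_mul_atTop hρ0 ((tendsto_rpow_atTop ha).comp hxtend)
    have t2 : Tendsto (fun t : ℕ => τ / ρ t) atTop (nhds 0) :=
      tendsto_const_nhds.div_atTop hρtend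
    have ha1 : a ≤ 1 := le_trans hab hb1
    have t3 : Tendsto (fun t : ℕ => ((t:ℝ)+1) ^ (b-a) * ((1 + 1/((t:ℝ)+1)) ^ a - 1))
        atTop (nhds 0) := by
      have hupper : ∀ t : ℕ, ((t:ℝ)+1) ^ (b-a) * ((1 + 1/((t:ℝ)+1)) ^ a - 1)
          ≤ a * ((t:ℝ)+1) ^ (b-a-1) := by
        intro t
        have hxt := hx t
        have hs : (0:ℝ) ≤ 1/((t:ℝ)+1) := by positivity
        have hbern : (1 + 1/((t:ℝ)+1)) ^ a ≤ 1 + a * (1/((t:ℝ)+1)) :=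
          rpow_one_add_le_one_add_mul_self (by linarith) ha.le ha1
        have h4 : ((t:ℝ)+1) ^ (b-a) * ((1 + 1/((t:ℝ)+1)) ^ a - 1)
            ≤ ((t:ℝ)+1) ^ (b-a) * (a * (1/((t:ℝ)+1))) := by
          apply mul_le_mul_of_nonneg_left (by linarith) (by positivity)
        refine h4.trans ?_
        rw [show b - a - 1 = (b-a) + (-1) by ring, Real.rpow_add hxt,
          Real.rpow_neg_one]
        apply le_of_eq
        ring
      have hlower : ∀ t : ℕ, (0:ℝ) ≤ ((t:ℝ)+1) ^ (b-a) * ((1 + 1/((t:ℝ)+1)) ^ a - 1) := by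
        intro t
        have hxt := hx t
        have h1 : (1:ℝ) ≤ (1 + 1/((t:ℝ)+1)) ^ a :=
          Real.one_le_rpow (le_add_of_nonneg_right (by positivity)) ha.le
        have h2 : (0:ℝ) ≤ ((t:ℝ)+1) ^ (b-a) := by positivity
        nlinarith
      have hub : Tendsto (fun t : ℕ => a * ((t:ℝ)+1) ^ (b-a-1)) atTop (nhds 0) := by
        have hneg : Tendsto (fun x : ℝ => x ^ (b-a-1)) atTop (nhds 0) := by
          have := tendsto_rpow_neg_atTop (y := a + 1 - b) (by linarith)
          simpa [show -(a+1-b) = b - a - 1 by ring] using this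
        simpa using (hneg.comp hxtend).const_mul a
      exact tendsto_of_tendsto_of_tendsto_of_le_of_le tendsto_const_nhds hub hlower hupper
    have hmain : Tendsto (fun t : ℕ => (1 + 1/((t:ℝ)+1)) ^ a * (1 - τ / ρ t)
        - (α0/ρ0) * ((t:ℝ)+1) ^ (b-a) * ((1 + 1/((t:ℝ)+1)) ^ a - 1)) atTop (nhds 1) := by
      have h1 : Tendsto (fun t : ℕ => (1 + 1/((t:ℝ)+1)) ^ a * (1 - τ / ρ t)) atTop
          (nhds (1 * (1 - 0))) :=
        t1.mul ((tendsto_const_nhds :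
          Tendsto (fun _ : ℕ => (1:ℝ)) atTop (nhds 1)).sub t2)
      have h2 := t3.const_mul (α0/ρ0)
      have h3 := h1.sub h2
      norm_num at h3
      simpa [mul_assoc] using h3
    refine ⟨hmain, ?_⟩
    have hev : ∀ᶠ t : ℕ in atTop, (0:ℝ) <
        ((1 + 1/((t:ℝ)+1)) ^ a * (1 - τ / ρ t)
          - (α0/ρ0) * ((t:ℝ)+1) ^ (b-a) * ((1 + 1/((t:ℝ)+1)) ^ a - 1)) :=
      hmain.eventually (eventually_gt_nhds (by norm_num))
    rw [eventually_atTop] at hev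
    obtain ⟨N, hN⟩ := hev
    refine ⟨N, fun t ht => ?_⟩
    have hpos : 0 < P t / (ρ t ^ 2 / α t) := by rw [key t]; exact hN t ht
    have hq : 0 < ρ t ^ 2 / α t := div_pos (pow_pos (hρpos t) 2) (hαpos t)
    have hP : 0 < P t := by
      by_contra h
      push_neg at h
      have := div_nonpos_of_nonpos_of_nonneg h hq.le
      linarith
    rw [hPdef] at hP
    have h5 : ρ (t+1) - ρ t < ρ (t+1) * (ρ t - τ) / α t := by linarith
    have := (lt_div_iff₀ (hαpos t)).mp h5
    linarith [this]
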